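/- Let p be a prime, m and d natural numbers, and let k = (k_1,…,k_d), k' = (k'_1,…,k'_d) ∈ ℕ^d with k'_i ≤ k_i for all i. Then the product ∏_{i=1}^{d} ⟨k_i choose k'_i⟩_{(m),q}, a priori an element of ℚ(q), lies in the subring ℤ[q]_{(p,q−1)}. -/
import Mathlib
set_option maxHeartbeats 1000000
set_option synthInstance.maxHeartbeats 400000


noncomputable section

open Polynomial

/-- `ℤ[q]`, the polynomial ring in one variable `q` over `ℤ`. -/
abbrev Zq : Type := Polynomial ℤ

/-- `ℚ(q)`, realized as the fraction field of `ℤ[q]`. -/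
abbrev Qq : Type := FractionRing Zq

/-- The canonical embedding `ℤ[q] → ℚ(q)`. -/
def ι : Zq →+* Qq := algebraMap Zq Qq

/-- The image of the variable `q` in `ℚ(q)`. -/
def qQ : Qq := ι X

/-- The `q^a`-integer `(n)_{q^a} = 1 + q^a + ⋯ + q^{a(n-1)}` in `ℤ[q]`. -/
def qInt (a n : ℕ) : Zq := ∑ j ∈ Finset.range n, X ^ (a * j)

/-- The `q^a`-factorial `(n)_{q^a}! = ∏_{i=1}^{n} (i)_{q^a}` in `ℤ[q]`. -/
def qFact (a n : ℕ) : Zq := ∏ i ∈ Finset.range n, qInt a (i + 1)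

/-- The prime ideal `(p, q - 1)` of `ℤ[q]`. -/
def pqIdeal (p : ℕ) : Ideal Zq := Ideal.span {C (p : ℤ), X - 1}

/-- Membership in the localization `ℤ[q]_{(p,q-1)}`, viewed inside `ℚ(q)`:
`x = a / b` with `b ∉ (p, q-1)`. -/
def InLoc (p : ℕ) (x : Qq) : Prop :=
  ∃ a b : Zq, b ∉ pqIdeal p ∧ x * ι b = ι a

/-- Being a unit of the localization `ℤ[q]_{(p,q-1)}`, viewed inside `ℚ(q)`:
`x = a / b` with `a, b ∉ (p, q-1)`. -/
def IsLocUnit (p : ℕ) (x : Qq) : Prop :=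
  ∃ a b : Zq, a ∉ pqIdeal p ∧ b ∉ pqIdeal p ∧ x * ι b = ι a

/-- The Gaussian `q`-binomial coefficient `(k choose k')_q` as an element of `ℚ(q)`. -/
def qBinomF (k k' : ℕ) : Qq :=
  ι (qFact 1 k) / (ι (qFact 1 k') * ι (qFact 1 (k - k')))

/-- The level-`m` coefficient `{k choose k'}_{(m),q}` as an element of `ℚ(q)`. -/
def braceC (p m k k' : ℕ) : Qq :=
  ι (qFact (p ^ m) (k / p ^ m)) /
    (ι (qFact (p ^ m) (k' / p ^ m)) * ι (qFact (p ^ m) ((k - k') / p ^ m)))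

/-- The level-`m` coefficient `⟨k choose k'⟩_{(m),q}` as an element of `ℚ(q)`. -/
def angleC (p m k k' : ℕ) : Qq := qBinomF k k' * (braceC p m k k')⁻¹


section Aux

lemma iota_inj : Function.Injective ι :=
  IsFractionRing.injective Zq Qq

lemma iota_ne_zero {f : Zq} (hf : f ≠ 0) : ι f ≠ 0 := by
  intro h
  exact hf (iota_inj (by simpa using h))

lemma qInt_eval_one (a n : ℕ) : (qInt a n).eval 1 = n := by
  simp [qInt, Polynomial.eval_finset_sum]

lemma qInt_ne_zero (a : ℕ) {n : ℕ} (hn : n ≠ 0) : qInt a n ≠ 0 := by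
  intro h
  have h1 := congrArg (Polynomial.eval 1) h
  rw [qInt_eval_one] at h1
  simp only [Polynomial.eval_zero] at h1
  exact hn (by exact_mod_cast h1)

lemma qFact_ne_zero (a n : ℕ) : qFact a n ≠ 0 := by
  rw [qFact]
  exact Finset.prod_ne_zero_iff.mpr fun i _ => qInt_ne_zero a (Nat.succ_ne_zero i)

lemma mem_pqIdeal_iff {p : ℕ} (f : Zq) : f ∈ pqIdeal p ↔ (p : ℤ) ∣ f.eval 1 := by
  constructor
  · intro hf
    have hle : pqIdeal p ≤ Ideal.comap (Polynomial.evalRingHom (1 : ℤ))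
        (Ideal.span {(p : ℤ)}) := by
      rw [pqIdeal, Ideal.span_le]
      intro g hg
      simp only [Set.mem_insert_iff, Set.mem_singleton_iff] at hg
      rcases hg with rfl | rfl <;>
        simp [Ideal.mem_comap, Ideal.mem_span_singleton]
    simpa [Ideal.mem_comap, Ideal.mem_span_singleton] using hle hf
  · rintro ⟨t, ht⟩
    have h1 : f = (f - C (f.eval 1)) + C (f.eval 1) := by ring
    rw [h1]
    refine Ideal.add_mem _ ?_ ?_
    · obtain ⟨g, hg⟩ := Polynomial.X_sub_C_dvd_sub_C_eval (a := (1 : ℤ)) (p := f)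
      rw [hg]
      have hX : (X - 1 : Zq) ∈ pqIdeal p := Ideal.subset_span (by simp)
      simpa [Polynomial.C_1] using Ideal.mul_mem_right g _ hX
    · rw [ht, show (C ((p : ℤ) * t) : Zq) = C (p : ℤ) * C t from map_mul C _ _]
      exact Ideal.mul_mem_right _ _ (Ideal.subset_span (by simp))

lemma notMem_pqIdeal {p : ℕ} {f : Zq} (h : ¬ (p : ℤ) ∣ f.eval 1) : f ∉ pqIdeal p :=
  fun hf => h ((mem_pqIdeal_iff f).1 hf)

lemma one_notMem_pqIdeal {p : ℕ} (hp : p.Prime) : (1 : Zq) ∉ pqIdeal p := by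
  apply notMem_pqIdeal
  simpa using (Nat.prime_iff_prime_int.mp hp).not_dvd_one

lemma mul_notMem_pqIdeal {p : ℕ} (hp : p.Prime) {f g : Zq}
    (hf : f ∉ pqIdeal p) (hg : g ∉ pqIdeal p) : f * g ∉ pqIdeal p := by
  rw [mem_pqIdeal_iff] at hf hg ⊢
  rw [Polynomial.eval_mul]
  intro hd
  rcases (Nat.prime_iff_prime_int.mp hp).dvd_mul.mp hd with h | h
  · exact hf h
  · exact hg h

lemma InLoc.one {p : ℕ} (hp : p.Prime) : InLoc p 1 :=
  ⟨1, 1, one_notMem_pqIdeal hp, by simp⟩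

lemma InLoc.mul {p : ℕ} (hp : p.Prime) {x y : Qq}
    (hx : InLoc p x) (hy : InLoc p y) : InLoc p (x * y) := by
  obtain ⟨a, b, hb, hab⟩ := hx
  obtain ⟨c, d, hd, hcd⟩ := hy
  exact ⟨a * c, b * d, mul_notMem_pqIdeal hp hb hd, by
    rw [map_mul, map_mul, ← hab, ← hcd]; ring⟩

/-- The product of the `(i)_{q^a}` for `i ≤ n` with `p ∤ i`. -/
def qG (p a n : ℕ) : Zq :=
  ∏ i ∈ Finset.range n, if p ∣ (i + 1) then 1 else qInt a (i + 1)

lemma qG_notMem_pqIdeal {p : ℕ} (hp : p.Prime) (a n : ℕ) : qG p a n ∉ pqIdeal p := by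
  haveI := Fact.mk hp
  apply notMem_pqIdeal
  intro hdvd
  have h0 : (((qG p a n).eval 1 : ℤ) : ZMod p) = 0 :=
    (ZMod.intCast_zmod_eq_zero_iff_dvd _ p).mpr hdvd
  rw [qG] at h0
  rw [Polynomial.eval_prod] at h0
  push_cast at h0
  rw [Finset.prod_eq_zero_iff] at h0
  obtain ⟨i, _, hi⟩ := h0
  by_cases h : p ∣ (i + 1)
  · rw [if_pos h] at hi; simp at hi
  · rw [if_neg h] at hi
    rw [qInt_eval_one] at hi
    have : ((i + 1 : ℕ) : ZMod p) = 0 := by exact_mod_cast hi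
    exact h ((ZMod.natCast_eq_zero_iff _ p).mp this)

lemma X_pow_sub_one_ne_zero {a : ℕ} (ha : a ≠ 0) : ((X : Zq) ^ a - 1) ≠ 0 := by
  intro h
  have h0 := congrArg (Polynomial.eval 0) h
  simp [zero_pow ha] at h0

lemma qInt_mul_geom (a n : ℕ) : qInt a n * ((X : Zq) ^ a - 1) = X ^ (a * n) - 1 := by
  have h : qInt a n = ∑ j ∈ Finset.range n, ((X : Zq) ^ a) ^ j := by
    simp [qInt, pow_mul]
  rw [h, geom_sum_mul, ← pow_mul]

lemma qInt_mul_level {a : ℕ} (ha : a ≠ 0) (p j : ℕ) :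
    qInt a (p * j) = qInt (a * p) j * qInt a p := by
  apply mul_right_cancel₀ (X_pow_sub_one_ne_zero ha)
  rw [mul_assoc, qInt_mul_geom a p, qInt_mul_geom a (p * j), qInt_mul_geom (a * p) j,
    ← mul_assoc a p j]

lemma qFact_succ (a n : ℕ) : qFact a (n + 1) = qFact a n * qInt a (n + 1) :=
  Finset.prod_range_succ _ _

lemma qG_succ (p a n : ℕ) :
    qG p a (n + 1) = qG p a n * (if p ∣ (n + 1) then 1 else qInt a (n + 1)) :=
  Finset.prod_range_succ _ _

lemma qFact_factor (p : ℕ) {a : ℕ} (ha : a ≠ 0) (n : ℕ) :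
    qFact a n = qG p a n * (qFact (a * p) (n / p) * (qInt a p) ^ (n / p)) := by
  induction n with
  | zero => simp [qFact, qG]
  | succ n ih =>
    by_cases h : p ∣ (n + 1)
    · have hd : (n + 1) / p = n / p + 1 := by rw [Nat.succ_div, if_pos h]
      have hp0 : p ≠ 0 := by rintro rfl; simp at h
      have hmul : n + 1 = p * (n / p + 1) := by
        conv_lhs => rw [← Nat.div_mul_cancel h]
        rw [hd]; ring
      rw [qFact_succ, ih, qG_succ, if_pos h, hd, qFact_succ]
      rw [show qInt a (n + 1) = qInt (a * p) (n / p + 1) * qInt a p by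
        rw [← qInt_mul_level ha, ← hmul]]
      ring
    · have hd : (n + 1) / p = n / p := by rw [Nat.succ_div, if_neg h, Nat.add_zero]
      rw [qFact_succ, ih, qG_succ, if_neg h, hd]
      ring

lemma braceC_ne_zero (p m k k' : ℕ) : braceC p m k k' ≠ 0 := by
  rw [braceC]
  exact div_ne_zero (iota_ne_zero (qFact_ne_zero _ _))
    (mul_ne_zero (iota_ne_zero (qFact_ne_zero _ _)) (iota_ne_zero (qFact_ne_zero _ _)))

lemma qBinomF_ne_zero (k k' : ℕ) : qBinomF k k' ≠ 0 := by
  rw [qBinomF]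
  exact div_ne_zero (iota_ne_zero (qFact_ne_zero _ _))
    (mul_ne_zero (iota_ne_zero (qFact_ne_zero _ _)) (iota_ne_zero (qFact_ne_zero _ _)))

lemma div_add_div_le {x y N : ℕ} (hN : N ≠ 0) : x / N + y / N ≤ (x + y) / N := by
  rw [Nat.le_div_iff_mul_le (Nat.pos_of_ne_zero hN), Nat.add_mul]
  exact Nat.add_le_add (Nat.div_mul_le_self x N) (Nat.div_mul_le_self y N)

lemma brace_quot_inLoc {p : ℕ} (hp : p.Prime) (j k k' : ℕ) (h : k' ≤ k) :
    InLoc p (braceC p j k k' * (braceC p (j + 1) k k')⁻¹) := by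
  set a := p ^ j with hadef
  have ha : a ≠ 0 := pow_ne_zero _ hp.pos.ne'
  set r := k / a with hr
  set r' := k' / a with hr'
  set r'' := (k - k') / a with hr''
  have hdiv : ∀ t : ℕ, t / p ^ (j + 1) = t / a / p := by
    intro t
    rw [pow_succ, Nat.div_div_eq_div_mul]
  have hle : r' / p + r'' / p ≤ r / p := by
    have h1 : r' + r'' ≤ r := by
      have := div_add_div_le (x := k') (y := k - k') (N := a) ha
      rwa [Nat.add_sub_cancel' h] at this
    calc r' / p + r'' / p ≤ (r' + r'') / p := div_add_div_le hp.pos.ne'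
    _ ≤ r / p := Nat.div_le_div_right h1
  obtain ⟨e, he⟩ : ∃ e, r / p = r' / p + r'' / p + e :=
    ⟨r / p - (r' / p + r'' / p), by omega⟩
  -- the polynomial identity
  have hpoly :
      qFact a r * qFact (a * p) (r' / p) * qFact (a * p) (r'' / p) *
        (qG p a r' * qG p a r'') =
      (qG p a r * (qInt a p) ^ e) *
        (qFact a r' * qFact a r'' * qFact (a * p) (r / p)) := by
    rw [qFact_factor p ha r, qFact_factor p ha r', qFact_factor p ha r'', he]
    rw [pow_add, pow_add]
    ring
  refine ⟨qG p a r * (qInt a p) ^ e,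
    qG p a r' * qG p a r'',
    mul_notMem_pqIdeal hp (qG_notMem_pqIdeal hp a r') (qG_notMem_pqIdeal hp a r''), ?_⟩
  have hne : ∀ b c : ℕ, ι (qFact b c) ≠ 0 := fun b c => iota_ne_zero (qFact_ne_zero b c)
  have hpow : p ^ (j + 1) = a * p := by rw [hadef, pow_succ]
  rw [braceC, braceC]
  simp only [hdiv]
  simp only [hpow, ← hr, ← hr', ← hr'', ← hadef]
  have hιpoly := congrArg ι hpoly
  simp only [map_mul, map_pow] at hιpoly ⊢
  have h1 := hne a r
  have h2 := hne a r'
  have h3 := hne a r''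
  have h4 := hne (a * p) (r / p)
  have h5 := hne (a * p) (r' / p)
  have h6 := hne (a * p) (r'' / p)
  field_simp
  linear_combination hιpoly

lemma angle_inLoc {p : ℕ} (hp : p.Prime) (m k k' : ℕ) (h : k' ≤ k) :
    InLoc p (angleC p m k k') := by
  induction m with
  | zero =>
    have h0 : braceC p 0 k k' = qBinomF k k' := by
      simp [braceC, qBinomF]
    rw [angleC, h0, mul_inv_cancel₀ (qBinomF_ne_zero k k')]
    exact InLoc.one hp
  | succ m ih =>
    have hstep : angleC p (m + 1) k k' =
        angleC p m k k' * (braceC p m k k' * (braceC p (m + 1) k k')⁻¹) := by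
      rw [angleC, angleC]
      rw [mul_assoc, ← mul_assoc (braceC p m k k')⁻¹,
        inv_mul_cancel₀ (braceC_ne_zero p m k k'), one_mul]
    rw [hstep]
    exact InLoc.mul hp ih (brace_quot_inLoc hp m k k' h)

end Aux

/-- For multi-indices `k' ≤ k`, the product of the level-`m` coefficients
`⟨k_i choose k'_i⟩_{(m),q}` lies in `ℤ[q]_{(p,q-1)}`. -/
theorem stmt2 (p : ℕ) (hp : p.Prime) (m d : ℕ) (k k' : Fin d → ℕ)
    (h : ∀ i, k' i ≤ k i) :
    InLoc p (∏ i, angleC p m (k i) (k' i)) := by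
  exact Finset.prod_induction _ (InLoc p) (fun _ _ => InLoc.mul hp) (InLoc.one hp)
    (fun i _ => angle_inLoc hp m (k i) (k' i) (h i))
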